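/- arXiv:2602.12710 — 3 statements merged into one kernel-verified Lean document; each statement's English description precedes it below -/
import Mathlib

section
/- Let C ∈ ℝ^{(MN)×(MN)} and let J be a natural number with rank(R(C)) ≤ J. Then there exist matrices A_1,…,A_J ∈ ℝ^{M×M} and B_1,…,B_J ∈ ℝ^{N×N} such that C = ∑_{j=1}^J B_j ⊗ A_j. In particular, the minimal number of Kronecker product terms needed to represent C equals the rank of R(C). -/
open Matrix

lemma pad_sum {α : Type*} [AddCommMonoid α] {r J : ℕ} (h : r ≤ J) (f : Fin r → α) :
    (∑ j : Fin J, if hj : (j : ℕ) < r then f ⟨j, hj⟩ else 0) = ∑ i : Fin r, f i := by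
  rw [← Finset.sum_subset (Finset.subset_univ (Finset.univ.map (Fin.castLEEmb h)))
    (by
      intro j _ hj
      have : ¬ ((j : ℕ) < r) := by
        intro hc
        exact hj (Finset.mem_map.mpr ⟨⟨j, hc⟩, Finset.mem_univ _, by simp [Fin.castLEEmb]⟩)
      simp [this])]
  rw [Finset.sum_map]
  refine Finset.sum_congr rfl fun i _ => ?_
  simp [Fin.castLEEmb, Fin.castLE]

lemma rank1_sum_rank_le {m n : Type*} [Fintype m] [Fintype n] [DecidableEq n] {J : ℕ}
    (u : Fin J → m → ℝ) (v : Fin J → n → ℝ) :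
    (∑ j : Fin J, vecMulVec (u j) (v j)).rank ≤ J := by
  have heq : (∑ j : Fin J, vecMulVec (u j) (v j)) =
      (Matrix.of fun i j => u j i) * (Matrix.of fun j k => v j k) := by
    ext i k
    simp [mul_apply, vecMulVec, Matrix.sum_apply]
  rw [heq]
  exact (rank_mul_le_left _ _).trans ((rank_le_card_width _).trans (Fintype.card_fin J).le)

lemma rank_le_exists_rank1 {m n : Type*} [Fintype m] [Fintype n] [DecidableEq n] {J : ℕ}
    (X : Matrix m n ℝ) (hJ : X.rank ≤ J) :
    ∃ (u : Fin J → m → ℝ) (v : Fin J → n → ℝ), X = ∑ j, vecMulVec (u j) (v j) := by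
  set W := Submodule.span ℝ (Set.range Xᵀ) with hW
  have hr : X.rank = Module.finrank ℝ W := rank_eq_finrank_span_cols X
  set r := Module.finrank ℝ W with hrdef
  have hrJ : r ≤ J := hr ▸ hJ
  let b : Module.Basis (Fin r) ℝ W := Module.finBasis ℝ W
  have hcol : ∀ k : n, Xᵀ k ∈ W := fun k => Submodule.subset_span (Set.mem_range_self k)
  refine ⟨fun j => if hj : (j : ℕ) < r then ((b ⟨j, hj⟩ : W) : m → ℝ) else 0,
          fun j k => if hj : (j : ℕ) < r then b.repr ⟨Xᵀ k, hcol k⟩ ⟨j, hj⟩ else 0, ?_⟩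
  ext i k
  have hsum := b.sum_repr ⟨Xᵀ k, hcol k⟩
  have hXik := congrArg (fun (w : W) => (w : m → ℝ) i) hsum
  simp only [Submodule.coe_sum, Finset.sum_apply, SetLike.val_smul, Pi.smul_apply,
    smul_eq_mul] at hXik
  have hrw : ∀ c : Fin J,
      vecMulVec (if hj : (c : ℕ) < r then ((b ⟨c, hj⟩ : W) : m → ℝ) else 0)
        (fun k => if hj : (c : ℕ) < r then b.repr ⟨Xᵀ k, hcol k⟩ ⟨c, hj⟩ else 0) i k =
      if hj : (c : ℕ) < r then
        b.repr ⟨Xᵀ k, hcol k⟩ ⟨c, hj⟩ * ((b ⟨c, hj⟩ : W) : m → ℝ) i else 0 := by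
    intro c
    by_cases hc : (c : ℕ) < r <;> simp [vecMulVec, hc, mul_comm]
  rw [Matrix.sum_apply]
  calc X i k = Xᵀ k i := rfl
    _ = ∑ x : Fin r, b.repr ⟨Xᵀ k, hcol k⟩ x * ((b x : W) : m → ℝ) i := hXik.symm
    _ = _ := by rw [Finset.sum_congr rfl fun c _ => (hrw c)]; exact (pad_sum hrJ _).symm

/-- Kronecker product `B ⊗ A` with pair indexing `(n, m)`. -/
def kron {M N : ℕ} (B : Matrix (Fin N) (Fin N) ℝ) (A : Matrix (Fin M) (Fin M) ℝ) :
    Matrix (Fin N × Fin M) (Fin N × Fin M) ℝ :=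
  Matrix.of fun p q => B p.1 q.1 * A p.2 q.2

/-- The rearrangement operator `R`. -/
def rearr {M N : ℕ} (C : Matrix (Fin N × Fin M) (Fin N × Fin M) ℝ) :
    Matrix (Fin M × Fin M) (Fin N × Fin N) ℝ :=
  Matrix.of fun mm nn => C (nn.1, mm.1) (nn.2, mm.2)

/-- if `rank(R(C)) ≤ J` then `C` is a sum of `J` Kronecker product
terms; in particular the minimal number of Kronecker product terms needed to
represent `C` equals the rank of `R(C)`. -/
theorem stmt_4 {M N : ℕ} (C : Matrix (Fin N × Fin M) (Fin N × Fin M) ℝ) (J : ℕ) :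
    ((rearr C).rank ≤ J →
      ∃ (A : Fin J → Matrix (Fin M) (Fin M) ℝ) (B : Fin J → Matrix (Fin N) (Fin N) ℝ),
        C = ∑ j, kron (B j) (A j)) ∧
    (rearr C).rank =
      sInf {J' : ℕ | ∃ (A : Fin J' → Matrix (Fin M) (Fin M) ℝ)
          (B : Fin J' → Matrix (Fin N) (Fin N) ℝ), C = ∑ j, kron (B j) (A j)} := by
  have key : ∀ J' : ℕ,
      (∃ (A : Fin J' → Matrix (Fin M) (Fin M) ℝ) (B : Fin J' → Matrix (Fin N) (Fin N) ℝ),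
        C = ∑ j, kron (B j) (A j)) ↔
      (∃ (u : Fin J' → (Fin M × Fin M) → ℝ) (v : Fin J' → (Fin N × Fin N) → ℝ),
        rearr C = ∑ j, vecMulVec (u j) (v j)) := by
    intro J'
    constructor
    · rintro ⟨A, B, rfl⟩
      refine ⟨fun j mm => A j mm.1 mm.2, fun j nn => B j nn.1 nn.2, ?_⟩
      ext ⟨m, m'⟩ ⟨n, n'⟩
      simp [rearr, kron, vecMulVec, Matrix.sum_apply, mul_comm]
    · rintro ⟨u, v, h⟩
      refine ⟨fun j => Matrix.of fun m m' => u j (m, m'),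
              fun j => Matrix.of fun n n' => v j (n, n'), ?_⟩
      ext ⟨n, m⟩ ⟨n', m'⟩
      have h2 := congrFun (congrFun h (m, m')) (n, n')
      simp only [rearr, Matrix.of_apply, Matrix.sum_apply, vecMulVec_apply] at h2
      simp [kron, Matrix.sum_apply, h2, mul_comm]
  have hmem : (rearr C).rank ∈ {J' : ℕ | ∃ (A : Fin J' → Matrix (Fin M) (Fin M) ℝ)
      (B : Fin J' → Matrix (Fin N) (Fin N) ℝ), C = ∑ j, kron (B j) (A j)} :=
    (key _).mpr (rank_le_exists_rank1 _ le_rfl)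
  constructor
  · intro h
    exact (key J).mpr (rank_le_exists_rank1 _ h)
  · refine le_antisymm (le_csInf ⟨_, hmem⟩ fun J' hJ' => ?_) (Nat.sInf_le hmem)
    obtain ⟨u, v, h⟩ := (key J').mp hJ'
    rw [h]
    exact rank1_sum_rank_le u v
end

section
/- For natural numbers p, M, N, the difference between the number of identifying equations and the number of structural GVAR parameters satisfies the identity (p(MN)² + NM²) − (2pNM² + NM² + N(N−1)) = N·((N−2)pM² − N + 1); moreover, if N ≥ 3, p ≥ 1 and pM² ≥ N, this difference is strictly positive. -/
/-- the difference between the number of identifying equations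
`p(MN)² + NM²` and the number of structural GVAR parameters
`2pNM² + NM² + N(N−1)` equals `N·((N−2)pM² − N + 1)`; if `N ≥ 3`, `p ≥ 1` and
`pM² ≥ N`, this difference is strictly positive. -/
theorem stmt_16 (p M N : ℕ) :
    ((p * (M * N) ^ 2 + N * M ^ 2 : ℤ)
        - (2 * p * N * M ^ 2 + N * M ^ 2 + N * (N - 1))
      = N * ((N - 2) * p * M ^ 2 - N + 1)) ∧
    (3 ≤ N → 1 ≤ p → (N : ℤ) ≤ p * M ^ 2 →
      0 < (p * (M * N) ^ 2 + N * M ^ 2 : ℤ)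
        - (2 * p * N * M ^ 2 + N * M ^ 2 + N * (N - 1))) := by
  have key : ((p * (M * N) ^ 2 + N * M ^ 2 : ℤ)
        - (2 * p * N * M ^ 2 + N * M ^ 2 + N * (N - 1))
      = N * ((N - 2) * p * M ^ 2 - N + 1)) := by push_cast; ring
  refine ⟨key, fun hN hp hMp => ?_⟩
  rw [key]
  have hN3 : (3 : ℤ) ≤ N := by exact_mod_cast hN
  have hpM : (0 : ℤ) ≤ p * M ^ 2 := by positivity
  have h1 : (p : ℤ) * M ^ 2 ≤ ((N : ℤ) - 2) * (p * M ^ 2) :=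
    le_mul_of_one_le_left hpM (by linarith)
  have h2 : (0 : ℤ) < ((N : ℤ) - 2) * p * M ^ 2 - N + 1 := by
    nlinarith
  exact mul_pos (by exact_mod_cast Nat.pos_of_ne_zero (by omega)) h2
end

section
/- Let G ∈ ℝ^{(MN)×(MN)} be block lower triangular with all diagonal blocks equal to I_M, and let S ∈ ℝ^{(MN)×(MN)} be block diagonal with each diagonal block S_i ∈ ℝ^{M×M} lower triangular with strictly positive diagonal entries. Then L := G⁻¹·S is lower triangular with strictly positive diagonal entries, satisfies L·Lᵀ = G⁻¹·(S·Sᵀ)·G⁻ᵀ, and the diagonal blocks of L equal S_1,…,S_N; hence G and S are identified from the lower-triangular positive-diagonal factor of the reduced-form error covariance G⁻¹·(S·Sᵀ)·G⁻ᵀ. -/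
open Matrix Finset

/-- The `(n,n')`-block of `C`. -/
def blockOf {M N : ℕ} (C : Matrix (Fin N × Fin M) (Fin N × Fin M) ℝ) (n n' : Fin N) :
    Matrix (Fin M) (Fin M) ℝ :=
  Matrix.of fun m m' => C (n, m) (n', m')

/-- Lexicographic order on the pair indices: `(n,m) < (n',m')` iff `n < n'` or
(`n = n'` and `m < m'`). -/
def lexLT {M N : ℕ} (r c : Fin N × Fin M) : Prop :=
  r.1 < c.1 ∨ (r.1 = c.1 ∧ r.2 < c.2)

lemma blockOf_mul {M N : ℕ} (A B : Matrix (Fin N × Fin M) (Fin N × Fin M) ℝ) (n n' : Fin N) :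
    blockOf (A * B) n n' = ∑ k : Fin N, blockOf A n k * blockOf B k n' := by
  ext m m'
  simp [blockOf, Matrix.mul_apply, Matrix.sum_apply, Fintype.sum_prod_type]

lemma blockOf_one {M N : ℕ} (n n' : Fin N) :
    blockOf (1 : Matrix (Fin N × Fin M) (Fin N × Fin M) ℝ) n n'
      = if n = n' then 1 else 0 := by
  ext m m'
  by_cases h : n = n' <;>
    simp [blockOf, Matrix.one_apply, Prod.ext_iff, h]


/-- if `G` is block lower triangular with identity diagonal
blocks and `S` is block diagonal with lower triangular positive-diagonal
blocks `S_i`, then `L = G⁻¹·S` is lower triangular with strictly positive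
diagonal entries, satisfies `L·Lᵀ = G⁻¹·(S·Sᵀ)·G⁻ᵀ`, and the diagonal blocks
of `L` are `S_1,…,S_N`; hence `G` and `S` are identified from the Cholesky
factor of the reduced-form error covariance. -/
theorem stmt_17 {M N : ℕ} (G S : Matrix (Fin N × Fin M) (Fin N × Fin M) ℝ)
    (Sblk : Fin N → Matrix (Fin M) (Fin M) ℝ)
    (hG : ∀ n n' : Fin N, n < n' → blockOf G n n' = 0)
    (hGdiag : ∀ n : Fin N, blockOf G n n = 1)
    (hS : ∀ n n' : Fin N, n ≠ n' → blockOf S n n' = 0)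
    (hSdiag : ∀ n : Fin N, blockOf S n n = Sblk n)
    (hSlt : ∀ (n : Fin N) (m m' : Fin M), m < m' → Sblk n m m' = 0)
    (hSpos : ∀ (n : Fin N) (m : Fin M), 0 < Sblk n m m) :
    (∀ r c : Fin N × Fin M, lexLT r c → (G⁻¹ * S) r c = 0) ∧
    (∀ r : Fin N × Fin M, 0 < (G⁻¹ * S) r r) ∧
    (G⁻¹ * S) * (G⁻¹ * S)ᵀ = G⁻¹ * (S * Sᵀ) * (Gᵀ)⁻¹ ∧
    (∀ n : Fin N, blockOf (G⁻¹ * S) n n = Sblk n) := by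
  -- G is entrywise lower triangular (w.r.t. lex) with diagonal 1
  have hGlow : ∀ r c : Fin N × Fin M, lexLT r c → G r c = 0 := by
    rintro ⟨n, m⟩ ⟨n', m'⟩ (h | ⟨h, hm⟩)
    · have := hG n n' h
      simpa [blockOf] using congrFun (congrFun this m) m'
    · subst h
      have := hGdiag n
      have h2 := congrFun (congrFun this m) m'
      simp only [blockOf, Matrix.of_apply] at h2
      rw [h2, Matrix.one_apply_ne (by exact hm.ne)]
  -- block triangularity of G
  set b : Fin N × Fin M → (Fin N ×ₗ Fin M)ᵒᵈ := fun p => OrderDual.toDual (toLex p) with hb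
  have hblt : ∀ r c : Fin N × Fin M, b c < b r ↔ lexLT r c := by
    intro r c
    rw [hb]
    simp only [OrderDual.toDual_lt_toDual]
    rw [show (toLex r < toLex c) ↔ _ from Prod.Lex.lt_iff]
    rfl
  have hGBT : BlockTriangular G b := fun i j h => hGlow i j ((hblt i j).mp h)
  -- det G = 1
  have hdet : G.det = 1 := by
    have he : (G.submatrix (ofLex : Fin N ×ₗ Fin M ≃ Fin N × Fin M)
        (ofLex : Fin N ×ₗ Fin M ≃ Fin N × Fin M)).det = G.det :=
      Matrix.det_submatrix_equiv_self _ G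
    rw [← he]
    rw [Matrix.det_of_lowerTriangular _ ?_]
    · apply Finset.prod_eq_one
      intro i _
      have := hGdiag (ofLex i).1
      have h2 := congrFun (congrFun this (ofLex i).2) (ofLex i).2
      simpa [blockOf, Matrix.one_apply] using h2
    · intro i j hij
      apply hGlow
      rw [← hblt]
      exact hij
  have hdu : IsUnit G.det := by rw [hdet]; exact isUnit_one
  have : Invertible G := G.invertibleOfIsUnitDet hdu
  have hinvBT : BlockTriangular G⁻¹ b := blockTriangular_inv_of_blockTriangular hGBT
  have hGinvLow : ∀ r c : Fin N × Fin M, lexLT r c → G⁻¹ r c = 0 := fun r c h =>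
    hinvBT ((hblt r c).mpr h)
  -- block facts for G⁻¹
  have hGinvBlk0 : ∀ n n' : Fin N, n < n' → blockOf G⁻¹ n n' = 0 := by
    intro n n' h
    ext m m'
    simpa [blockOf] using hGinvLow (n, m) (n', m') (Or.inl h)
  have hGinvBlkDiag : ∀ n : Fin N, blockOf G⁻¹ n n = 1 := by
    intro n
    have h1 : blockOf (G⁻¹ * G) n n = 1 := by
      rw [Matrix.nonsing_inv_mul G hdu, blockOf_one, if_pos rfl]
    rw [blockOf_mul] at h1
    rw [Finset.sum_eq_single n ?h1 (by simp)] at h1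
    · rw [hGdiag, mul_one] at h1; exact h1
    · intro k _ hk
      rcases lt_or_gt_of_ne hk with hlt | hgt
      · rw [hG k n hlt, mul_zero]
      · rw [hGinvBlk0 n k hgt, zero_mul]
  -- blocks of L
  have hLblk : ∀ n n' : Fin N, blockOf (G⁻¹ * S) n n' = blockOf G⁻¹ n n' * Sblk n' := by
    intro n n'
    rw [blockOf_mul, Finset.sum_eq_single n' (fun k _ hk => by rw [hS k n' hk, mul_zero])
      (by simp), hSdiag]
  have hLdiag : ∀ n : Fin N, blockOf (G⁻¹ * S) n n = Sblk n := by
    intro n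
    rw [hLblk, hGinvBlkDiag, one_mul]
  have hentry : ∀ (r c : Fin N × Fin M),
      (G⁻¹ * S) r c = blockOf (G⁻¹ * S) r.1 c.1 r.2 c.2 := fun r c => rfl
  refine ⟨?_, ?_, ?_, hLdiag⟩
  · rintro ⟨n, m⟩ ⟨n', m'⟩ (h | ⟨h, hm⟩)
    · rw [hentry, hLblk, hGinvBlk0 n n' h, Matrix.zero_mul]
      rfl
    · subst h
      rw [hentry]
      simp only [hLdiag]
      exact hSlt n m m' hm
  · rintro ⟨n, m⟩
    rw [hentry]
    simp only [hLdiag]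
    exact hSpos n m
  · rw [Matrix.transpose_mul, Matrix.transpose_nonsing_inv, Matrix.mul_assoc,
      Matrix.mul_assoc, Matrix.mul_assoc]
end
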